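/- Every rack covering f: A → Fr(B) with free rack codomain is a trivial extension: whenever x ∈ A and a_1, ..., a_n ∈ A with signs δ_i ∈ {−1,1} satisfy f(x ◁^{δ_1} a_1 ··· ◁^{δ_n} a_n) = f(x), then x ◁^{δ_1} a_1 ··· ◁^{δ_n} a_n = x. -/

import Mathlib

/-- A rack: a set with operations `◁`, `◁⁻¹` satisfying (R1) and (R2). -/
class PaperRack (X : Type*) where
  act : X → X → X
  inv : X → X → X
  r1a : ∀ x y, inv (act x y) y = x
  r1b : ∀ x y, act (inv x y) y = x
  r2 : ∀ x y z, act (act x y) z = act (act x z) (act y z)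

infixl:70 " ◁ " => PaperRack.act
infixl:70 " ◁⁻¹ " => PaperRack.inv

/-- The free rack `Fr(B) = B × F(B)`, with
`(b,g) ◁ (c,h) = (b, g·h⁻¹·c·h)` and `(b,g) ◁⁻¹ (c,h) = (b, g·h⁻¹·c⁻¹·h)`. -/
instance freeRack (B : Type*) : PaperRack (B × FreeGroup B) where
  act p q := (p.1, p.2 * q.2⁻¹ * FreeGroup.of q.1 * q.2)
  inv p q := (p.1, p.2 * q.2⁻¹ * (FreeGroup.of q.1)⁻¹ * q.2)
  r1a p q := by cases p; simp [mul_assoc]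
  r1b p q := by cases p; simp [mul_assoc]
  r2 p q r := by cases p; simp [mul_assoc]

/-- `x ◁^{δ₁} a₁ ⋯ ◁^{δₙ} aₙ`: the successive action on `x` of a list of elements
with signs (`true` for `◁`, `false` for `◁⁻¹`). -/
def foldAct {X : Type*} [PaperRack X] (x : X) (l : List (X × Bool)) : X :=
  l.foldl (fun y p => if p.2 then y ◁ p.1 else y ◁⁻¹ p.1) x

/-- Every rack covering `f : A → Fr(B)` with free codomain is a trivial
extension: it reflects loops, i.e. whenever
`f (x ◁^{δ₁} a₁ ⋯ ◁^{δₙ} aₙ) = f x` one has `x ◁^{δ₁} a₁ ⋯ ◁^{δₙ} aₙ = x`. -/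
theorem covering_over_free_rack_is_trivial {A B : Type*} [PaperRack A]
    (f : A → B × FreeGroup B)
    (hact : ∀ x y : A, f (x ◁ y) = f x ◁ f y)
    (hinv : ∀ x y : A, f (x ◁⁻¹ y) = f x ◁⁻¹ f y)
    (hsurj : Function.Surjective f)
    (hcov : ∀ a b x : A, f a = f b → (x ◁ a) ◁⁻¹ b = x) :
    ∀ (x : A) (l : List (A × Bool)),
      f (foldAct x l) = f x → foldAct x l = x := by
  classical
  have fr_act : ∀ p q : B × FreeGroup B,
      p ◁ q = (p.1, p.2 * q.2⁻¹ * FreeGroup.of q.1 * q.2) := fun _ _ => rfl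
  have fr_inv : ∀ p q : B × FreeGroup B,
      p ◁⁻¹ q = (p.1, p.2 * q.2⁻¹ * (FreeGroup.of q.1)⁻¹ * q.2) := fun _ _ => rfl
  -- the action depends only on the image
  have key : ∀ x a b : A, f a = f b → x ◁ a = x ◁ b := by
    intro x a b h
    calc x ◁ a = ((x ◁ a) ◁⁻¹ b) ◁ b := (PaperRack.r1b _ _).symm
    _ = x ◁ b := by rw [hcov a b x h]
  -- section of f
  set s : B × FreeGroup B → A := Function.surjInv hsurj with hsdef
  have hfs : ∀ q, f (s q) = q := Function.surjInv_eq hsurj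
  -- generator permutations and the induced action of the free group
  let σ : B → Equiv.Perm A := fun b =>
    { toFun := fun x => x ◁ s (b, 1)
      invFun := fun x => x ◁⁻¹ s (b, 1)
      left_inv := fun x => PaperRack.r1a x _
      right_inv := fun x => PaperRack.r1b x _ }
  let ψ : FreeGroup B →* (Equiv.Perm A)ᵐᵒᵖ :=
    FreeGroup.lift (fun b => MulOpposite.op (σ b))
  let Φ : FreeGroup B → A → A := fun w x => (ψ w).unop x
  have Φmul : ∀ u v x, Φ (u * v) x = Φ v (Φ u x) := by
    intro u v x
    simp only [Φ, map_mul, MulOpposite.unop_mul, Equiv.Perm.mul_apply]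
  have Φone : ∀ x, Φ 1 x = x := by
    intro x; simp only [Φ, map_one, MulOpposite.unop_one, Equiv.Perm.one_apply]
  have Φgen : ∀ b x, Φ (FreeGroup.of b) x = x ◁ s (b, 1) := by
    intro b x
    simp only [Φ, ψ, FreeGroup.lift_apply_of, MulOpposite.unop_op]
    rfl
  have Φcancel : ∀ w x, Φ w⁻¹ (Φ w x) = x := by
    intro w x; rw [← Φmul]; simp [Φone]
  -- from an act-formula we get the inv-formula
  have invact : ∀ (a : A) (w : FreeGroup B),
      (∀ y, y ◁ a = Φ w y) → ∀ x, x ◁⁻¹ a = Φ w⁻¹ x := by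
    intro a w h x
    have h2 : Φ w (x ◁⁻¹ a) = x := by rw [← h]; exact PaperRack.r1b x a
    calc x ◁⁻¹ a = Φ w⁻¹ (Φ w (x ◁⁻¹ a)) := (Φcancel _ _).symm
    _ = Φ w⁻¹ x := by rw [h2]
  -- rack identities
  have actact : ∀ x y z : A, x ◁ (y ◁ z) = ((x ◁⁻¹ z) ◁ y) ◁ z := by
    intro x y z
    conv_lhs => rw [← PaperRack.r1b x z]
    exact (PaperRack.r2 (x ◁⁻¹ z) y z).symm
  have actinv : ∀ x y z : A, x ◁ (y ◁⁻¹ z) = ((x ◁ z) ◁ y) ◁⁻¹ z := by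
    intro x y z
    have h2 := PaperRack.r2 x (y ◁⁻¹ z) z
    rw [PaperRack.r1b y z] at h2
    calc x ◁ (y ◁⁻¹ z) = ((x ◁ (y ◁⁻¹ z)) ◁ z) ◁⁻¹ z := (PaperRack.r1a _ _).symm
    _ = ((x ◁ z) ◁ y) ◁⁻¹ z := by rw [h2]
  -- main induction: extending the conjugator word
  have D : ∀ h : FreeGroup B, ∀ (c : B) (g : FreeGroup B),
      (∀ x a, f a = (c, g) → x ◁ a = Φ (g⁻¹ * FreeGroup.of c * g) x) →
      ∀ x a, f a = (c, g * h) →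
        x ◁ a = Φ ((g * h)⁻¹ * FreeGroup.of c * (g * h)) x := by
    intro h
    induction h using FreeGroup.induction_on with
    | C1 =>
      intro c g hg x a ha
      simpa using hg x a (by simpa using ha)
    | of b =>
      intro c g hg x a ha
      replace ha : f a = (c, g * FreeGroup.of b) := ha
      show x ◁ a = Φ ((g * FreeGroup.of b)⁻¹ * FreeGroup.of c * (g * FreeGroup.of b)) x
      have hfa' : f (s (c, g) ◁ s (b, 1)) = (c, g * FreeGroup.of b) := by
        rw [hact, hfs, hfs, fr_act]; simp
      have hx := key x a (s (c, g) ◁ s (b, 1)) (by rw [ha, hfa'])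
      rw [hx, actact]
      have h1 : x ◁⁻¹ s (b, 1) = Φ (FreeGroup.of b)⁻¹ x :=
        invact (s (b, 1)) (FreeGroup.of b) (fun y => (Φgen b y).symm) x
      rw [h1, hg _ _ (hfs (c, g)), ← Φgen b, ← Φmul, ← Φmul]
      congr 1
      group
    | inv_of b _ =>
      intro c g hg x a ha
      replace ha : f a = (c, g * (FreeGroup.of b)⁻¹) := ha
      show x ◁ a =
        Φ ((g * (FreeGroup.of b)⁻¹)⁻¹ * FreeGroup.of c * (g * (FreeGroup.of b)⁻¹)) x
      have hfa' : f (s (c, g) ◁⁻¹ s (b, 1)) = (c, g * (FreeGroup.of b)⁻¹) := by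
        rw [hinv, hfs, hfs, fr_inv]; simp
      have hx := key x a (s (c, g) ◁⁻¹ s (b, 1)) (by rw [ha, hfa'])
      rw [hx, actinv]
      have h1 : ((x ◁ s (b, 1)) ◁ s (c, g)) ◁⁻¹ s (b, 1)
          = Φ (FreeGroup.of b)⁻¹ ((x ◁ s (b, 1)) ◁ s (c, g)) :=
        invact (s (b, 1)) (FreeGroup.of b) (fun y => (Φgen b y).symm) _
      rw [h1, hg _ _ (hfs (c, g)), ← Φgen b, ← Φmul, ← Φmul]
      congr 1
      group
    | mul u v ihu ihv =>
      intro c g hg x a ha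
      have H2 := ihv c (g * u) (ihu c g hg) x a (by rw [ha, mul_assoc])
      rw [H2]
      congr 1
      group
  -- action formula for arbitrary elements
  have C : ∀ (c : B) (h : FreeGroup B) (x a : A), f a = (c, h) →
      x ◁ a = Φ (h⁻¹ * FreeGroup.of c * h) x := by
    intro c h x a ha
    have base : ∀ x a, f a = (c, (1 : FreeGroup B)) →
        x ◁ a = Φ ((1 : FreeGroup B)⁻¹ * FreeGroup.of c * 1) x := by
      intro x a ha
      have := key x a (s (c, 1)) (by rw [ha, hfs])
      rw [this, ← Φgen c]
      congr 1
    have := D h c 1 base x a (by simpa using ha)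
    simpa using this
  have Cinv : ∀ (c : B) (h : FreeGroup B) (x a : A), f a = (c, h) →
      x ◁⁻¹ a = Φ (h⁻¹ * (FreeGroup.of c)⁻¹ * h) x := by
    intro c h x a ha
    have := invact a (h⁻¹ * FreeGroup.of c * h) (fun y => C c h y a ha) x
    rw [this]
    congr 1
    group
  -- the word of a list
  let wd : A × Bool → FreeGroup B := fun p =>
    (f p.1).2⁻¹ *
      (if p.2 then FreeGroup.of (f p.1).1 else (FreeGroup.of (f p.1).1)⁻¹) *
      (f p.1).2
  let W : List (A × Bool) → FreeGroup B := fun l => (l.map wd).prod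
  have main : ∀ (l : List (A × Bool)) (x : A),
      f (foldAct x l) = ((f x).1, (f x).2 * W l) ∧ foldAct x l = Φ (W l) x := by
    intro l
    induction l with
    | nil =>
      intro x
      constructor
      · simp [foldAct, W, wd]
      · simp [foldAct, W, wd, Φone]
    | cons p l ih =>
      intro x
      have hstep : foldAct x (p :: l)
          = foldAct (if p.2 then x ◁ p.1 else x ◁⁻¹ p.1) l := by
        simp [foldAct]
      have hy : f (if p.2 then x ◁ p.1 else x ◁⁻¹ p.1)
          = ((f x).1, (f x).2 * wd p) := by
        rcases hb : p.2 with _ | _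
        · rw [if_neg (by simp [hb]), hinv x p.1, fr_inv]
          simp [wd, hb, mul_assoc]
        · rw [if_pos (by simp [hb]), hact x p.1, fr_act]
          simp [wd, hb, mul_assoc]
      have hy2 : (if p.2 then x ◁ p.1 else x ◁⁻¹ p.1) = Φ (wd p) x := by
        rcases hb : p.2 with _ | _
        · simp only [hb, if_false, wd]
          exact Cinv (f p.1).1 (f p.1).2 x p.1 rfl
        · simp only [hb, if_true, wd]
          exact C (f p.1).1 (f p.1).2 x p.1 rfl
      obtain ⟨ih1, ih2⟩ := ih (if p.2 then x ◁ p.1 else x ◁⁻¹ p.1)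
      constructor
      · rw [hstep, ih1, hy]
        simp [W, mul_assoc]
      · rw [hstep, ih2, hy2, ← Φmul]
        simp [W]
  intro x l hxl
  obtain ⟨h1, h2⟩ := main l x
  rw [h1] at hxl
  have hW : W l = 1 := by
    have := congrArg Prod.snd hxl
    simp only at this
    exact mul_left_cancel (a := (f x).2) (by simpa using this)
  rw [h2, hW, Φone]
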